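/- There exists an absolute constant C > 0 with the following property. For every n ≥ 1, every 3-tensor T ∈ ℝ^{n×n×n}, and every degree-6 pseudo-expectation L over the hypercube {−1,1}^{3n} in the 3n variables x₁,…,xₙ,y₁,…,yₙ,z₁,…,zₙ, one has L(∑_{i,j,k} T_{ijk} x_i y_j z_k) ≤ C·√n · max_{x,y,z ∈ {−1,1}^n} ∑_{i,j,k} T_{ijk} x_i y_j z_k. -/

import Mathlib

set_option linter.unusedSectionVars false

open MvPolynomial Finset Matrix

noncomputable def sgn (b : Bool) : ℝ := if b then 1 else -1

lemma sgn_mul_self (b : Bool) : sgn b * sgn b = 1 := by cases b <;> simp [sgn]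

lemma sgn_not (b : Bool) : sgn (!b) = - sgn b := by cases b <;> simp [sgn]

lemma abs_sgn (b : Bool) : |sgn b| ≤ 1 := by cases b <;> simp [sgn]

section hyp
variable {ι : Type} [Fintype ι] [DecidableEq ι]

lemma flip_sum_zero (t : ι) (f : (ι → Bool) → ℝ)
    (hf : ∀ ε b, f (Function.update ε t b) = f ε) :
    ∑ ε : ι → Bool, sgn (ε t) * f ε = 0 := by
  have hinv : Function.Involutive (fun ε : ι → Bool => Function.update ε t (!ε t)) := by
    intro ε; funext s
    by_cases h : s = t
    · subst h; simp
    · simp [Function.update_of_ne h]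
  have h2 : ∑ ε : ι → Bool, sgn ((Function.update ε t (!ε t)) t) * f (Function.update ε t (!ε t))
      = ∑ ε : ι → Bool, sgn (ε t) * f ε :=
    Fintype.sum_bijective _ hinv.bijective _ _ (fun ε => rfl)
  have h3 : ∀ ε : ι → Bool, sgn ((Function.update ε t (!ε t)) t) * f (Function.update ε t (!ε t))
      = - (sgn (ε t) * f ε) := by
    intro ε
    rw [Function.update_self, hf, sgn_not]; ring
  rw [Finset.sum_congr rfl (fun ε _ => h3 ε), Finset.sum_neg_distrib] at h2
  linarith

/-- orthogonality -/
lemma sgn_orth (t t' : ι) :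
    ∑ ε : ι → Bool, sgn (ε t) * sgn (ε t')
      = if t = t' then (Fintype.card (ι → Bool) : ℝ) else 0 := by
  by_cases h : t = t'
  · subst h; simp [sgn_mul_self, Finset.card_univ]
  · rw [if_neg h]
    exact flip_sum_zero t (fun ε => sgn (ε t')) (fun ε b => by
      beta_reduce; rw [Function.update_of_ne (Ne.symm h)])

end hyp

section moments
variable {ι : Type} [Fintype ι] [DecidableEq ι]

/-- signed sum over a finset of coordinates -/
noncomputable def ScS (s : Finset ι) (c : ι → ℝ) (ε : ι → Bool) : ℝ :=
  ∑ t ∈ s, c t * sgn (ε t)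

lemma ScS_update_notmem {s : Finset ι} {a : ι} (ha : a ∉ s) (c : ι → ℝ) (ε : ι → Bool) (b : Bool) :
    ScS s c (Function.update ε a b) = ScS s c ε := by
  unfold ScS
  refine Finset.sum_congr rfl (fun t ht => ?_)
  have hne : t ≠ a := by rintro rfl; exact ha ht
  rw [Function.update_of_ne hne]

/-- bilinear second moment -/
lemma ScS_L2 (s : Finset ι) (c c' : ι → ℝ) :
    ∑ ε : ι → Bool, ScS s c ε * ScS s c' ε
      = (Fintype.card (ι → Bool) : ℝ) * ∑ t ∈ s, c t * c' t := by
  have expand : ∀ ε : ι → Bool, ScS s c ε * ScS s c' ε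
      = ∑ t ∈ s, ∑ t' ∈ s, (c t * c' t') * (sgn (ε t) * sgn (ε t')) := by
    intro ε
    rw [ScS, ScS, Finset.sum_mul_sum]
    exact Finset.sum_congr rfl fun t _ => Finset.sum_congr rfl fun t' _ => by ring
  rw [Finset.sum_congr rfl (fun ε _ => expand ε)]
  rw [Finset.sum_comm]
  have : ∀ t ∈ s, ∑ ε : ι → Bool, ∑ t' ∈ s, (c t * c' t') * (sgn (ε t) * sgn (ε t'))
      = (Fintype.card (ι → Bool) : ℝ) * (c t * c' t) := by
    intro t _
    rw [Finset.sum_comm]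
    have h1 : ∀ t' ∈ s, ∑ ε : ι → Bool, (c t * c' t') * (sgn (ε t) * sgn (ε t'))
        = if t = t' then (Fintype.card (ι → Bool) : ℝ) * (c t * c' t) else 0 := by
      intro t' _
      rw [← Finset.mul_sum, sgn_orth]
      by_cases h : t = t'
      · subst h; simp [mul_comm]
      · simp [h]
    rw [Finset.sum_congr rfl h1, Finset.sum_ite_eq]
    simp_all
  rw [Finset.sum_congr rfl this, ← Finset.mul_sum]

lemma ScS_L4 (s : Finset ι) (c : ι → ℝ) :
    ∑ ε : ι → Bool, (ScS s c ε) ^ 4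
      ≤ 3 * (Fintype.card (ι → Bool) : ℝ) * (∑ t ∈ s, (c t) ^ 2) ^ 2 := by
  classical
  induction s using Finset.induction_on with
  | empty => simp [ScS]
  | @insert a s ha ih =>
    set N : ℝ := (Fintype.card (ι → Bool) : ℝ) with hN
    have hN0 : (0:ℝ) ≤ N := by positivity
    set Q : ℝ := ∑ t ∈ s, (c t) ^ 2 with hQ
    have hQ0 : (0:ℝ) ≤ Q := Finset.sum_nonneg fun t _ => sq_nonneg _
    have hsplit : ∀ ε : ι → Bool, ScS (insert a s) c ε = c a * sgn (ε a) + ScS s c ε := by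
      intro ε; rw [ScS, Finset.sum_insert ha]; rfl
    have hpt : ∀ ε : ι → Bool, (ScS (insert a s) c ε) ^ 4
        = ((c a)^4 + 6 * (c a)^2 * (ScS s c ε)^2 + (ScS s c ε)^4)
          + sgn (ε a) * ((4 * (c a)^3 + 4 * c a * (ScS s c ε)^2) * ScS s c ε) := by
      intro ε
      rw [hsplit ε]
      have h2 : sgn (ε a) * sgn (ε a) = 1 := sgn_mul_self _
      linear_combination ((c a)^4 * (sgn (ε a) * sgn (ε a) + 1)
        + 4 * (c a)^3 * ScS s c ε * sgn (ε a) + 6 * (c a)^2 * (ScS s c ε)^2) * h2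
    rw [Finset.sum_congr rfl (fun ε _ => hpt ε), Finset.sum_add_distrib]
    have hflip : ∑ ε : ι → Bool,
        sgn (ε a) * ((4 * (c a)^3 + 4 * c a * (ScS s c ε)^2) * ScS s c ε) = 0 := by
      apply flip_sum_zero
      intro ε b
      rw [ScS_update_notmem ha]
    rw [hflip, add_zero, Finset.sum_add_distrib, Finset.sum_add_distrib]
    have e1 : ∑ _ε : ι → Bool, (c a)^4 = N * (c a)^4 := by
      rw [Finset.sum_const, Finset.card_univ, nsmul_eq_mul]
    have e2' : ∑ ε : ι → Bool, (ScS s c ε)^2 = N * Q := by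
      calc ∑ ε : ι → Bool, (ScS s c ε)^2 = ∑ ε : ι → Bool, ScS s c ε * ScS s c ε := by
            simp only [pow_two]
        _ = N * ∑ t ∈ s, c t * c t := ScS_L2 s c c
        _ = N * Q := by rw [hQ]; congr 1; exact Finset.sum_congr rfl fun t _ => (pow_two _).symm
    have e2 : ∑ ε : ι → Bool, 6 * (c a)^2 * (ScS s c ε)^2 = 6 * (c a)^2 * (N * Q) := by
      rw [← Finset.mul_sum, e2']
    have e3 : ∑ ε : ι → Bool, (ScS s c ε)^4 ≤ 3 * N * Q ^ 2 := ih
    have hsum : ∑ t ∈ insert a s, (c t)^2 = (c a)^2 + Q := by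
      rw [Finset.sum_insert ha]
    rw [e1, e2, hsum]
    have key : 3*N*((c a)^2+Q)^2
        = 2*N*((c a)^2)^2 + (N*(c a)^4 + 6*(c a)^2*(N*Q) + 3*N*Q^2) := by ring
    linarith [e3, key, mul_nonneg hN0 (sq_nonneg ((c a)^2))]

end moments

section khintchine
variable {ι : Type} [Fintype ι] [DecidableEq ι]

/-- L1 Khintchine with constant √3 (unnormalized). -/
lemma khintchine (c : ι → ℝ) :
    (Fintype.card (ι → Bool) : ℝ) * Real.sqrt (∑ t, (c t)^2)
      ≤ Real.sqrt 3 * ∑ ε : ι → Bool, |ScS Finset.univ c ε| := by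
  classical
  set N : ℝ := (Fintype.card (ι → Bool) : ℝ) with hN
  have hNpos : (0:ℝ) < N := by
    rw [hN]; exact_mod_cast Fintype.card_pos
  set Q : ℝ := ∑ t, (c t)^2 with hQ
  have hQ0 : (0:ℝ) ≤ Q := Finset.sum_nonneg fun t _ => sq_nonneg _
  set A1 : ℝ := ∑ ε : ι → Bool, |ScS Finset.univ c ε| with hA1
  have hA10 : 0 ≤ A1 := Finset.sum_nonneg fun ε _ => abs_nonneg _
  set A2 : ℝ := ∑ ε : ι → Bool, (ScS Finset.univ c ε)^2 with hA2
  set A3 : ℝ := ∑ ε : ι → Bool, |ScS Finset.univ c ε|^3 with hA3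
  have hA30 : 0 ≤ A3 := Finset.sum_nonneg fun ε _ => by positivity
  set A4 : ℝ := ∑ ε : ι → Bool, (ScS Finset.univ c ε)^4 with hA4
  have hA2val : A2 = N * Q := by
    calc A2 = ∑ ε : ι → Bool, ScS Finset.univ c ε * ScS Finset.univ c ε := by
          simp only [hA2, pow_two]
      _ = N * ∑ t, c t * c t := ScS_L2 Finset.univ c c
      _ = N * Q := by rw [hQ]; congr 1; exact Finset.sum_congr rfl fun t _ => (pow_two _).symm
  have hA4le : A4 ≤ 3 * N * Q^2 := ScS_L4 Finset.univ c
  -- Cauchy–Schwarz: A2^2 ≤ A1 * A3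
  have cs1 : A2^2 ≤ A1 * A3 := by
    have := Finset.sum_mul_sq_le_sq_mul_sq Finset.univ
      (fun ε : ι → Bool => Real.sqrt |ScS Finset.univ c ε|)
      (fun ε : ι → Bool => |ScS Finset.univ c ε| * Real.sqrt |ScS Finset.univ c ε|)
    have e1 : ∀ ε : ι → Bool, Real.sqrt |ScS Finset.univ c ε| *
        (|ScS Finset.univ c ε| * Real.sqrt |ScS Finset.univ c ε|) = (ScS Finset.univ c ε)^2 := by
      intro ε
      rw [show ∀ x : ℝ, Real.sqrt x * (x * Real.sqrt x) = (Real.sqrt x * Real.sqrt x) * x from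
        fun x => by ring, Real.mul_self_sqrt (abs_nonneg _), ← abs_mul, ← pow_two, abs_sq]
    have e2 : ∀ ε : ι → Bool, (Real.sqrt |ScS Finset.univ c ε|)^2 = |ScS Finset.univ c ε| :=
      fun ε => Real.sq_sqrt (abs_nonneg _)
    have e3 : ∀ ε : ι → Bool, (|ScS Finset.univ c ε| * Real.sqrt |ScS Finset.univ c ε|)^2
        = |ScS Finset.univ c ε|^3 := by
      intro ε
      rw [mul_pow, Real.sq_sqrt (abs_nonneg _)]; ring
    rw [Finset.sum_congr rfl fun ε _ => e1 ε, Finset.sum_congr rfl fun ε _ => e2 ε,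
      Finset.sum_congr rfl fun ε _ => e3 ε] at this
    exact this
  -- Cauchy–Schwarz: A3^2 ≤ A2 * A4
  have cs2 : A3^2 ≤ A2 * A4 := by
    have := Finset.sum_mul_sq_le_sq_mul_sq Finset.univ
      (fun ε : ι → Bool => |ScS Finset.univ c ε|)
      (fun ε : ι → Bool => (ScS Finset.univ c ε)^2)
    have e1 : ∀ ε : ι → Bool, |ScS Finset.univ c ε| * (ScS Finset.univ c ε)^2
        = |ScS Finset.univ c ε|^3 := by
      intro ε; rw [← sq_abs]; ring
    have e2 : ∀ ε : ι → Bool, (|ScS Finset.univ c ε|)^2 = (ScS Finset.univ c ε)^2 :=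
      fun ε => sq_abs _
    have e3 : ∀ ε : ι → Bool, ((ScS Finset.univ c ε)^2)^2 = (ScS Finset.univ c ε)^4 :=
      fun ε => by ring
    rw [Finset.sum_congr rfl fun ε _ => e1 ε, Finset.sum_congr rfl fun ε _ => e2 ε,
      Finset.sum_congr rfl fun ε _ => e3 ε] at this
    exact this
  -- combine: N^2 * Q ≤ 3 * A1^2
  have key : N^2 * Q ≤ 3 * A1^2 := by
    by_cases hQz : Q = 0
    · rw [hQz]; nlinarith [sq_nonneg A1]
    · have hQpos : 0 < Q := lt_of_le_of_ne hQ0 (Ne.symm hQz)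
      -- A2^4 ≤ A1^2 * A3^2 ≤ A1^2 * A2 * A4 ≤ A1^2 * A2 * 3A2^2/N... work it out
      have h1 : A2^4 ≤ A1^2 * (A2 * A4) := by
        calc A2^4 = (A2^2)^2 := by ring
          _ ≤ (A1 * A3)^2 := by
              apply pow_le_pow_left₀ (sq_nonneg _) cs1
          _ = A1^2 * A3^2 := by ring
          _ ≤ A1^2 * (A2 * A4) := by
              apply mul_le_mul_of_nonneg_left cs2 (sq_nonneg _)
      have hA2pos : 0 < A2 := by rw [hA2val]; positivity
      have h2 : A2 * A4 ≤ A2 * (3 * N * Q^2) :=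
        mul_le_mul_of_nonneg_left hA4le (le_of_lt hA2pos)
      have h3 : (N*Q)^4 ≤ A1^2 * ((N*Q) * (3*N*Q^2)) := by
        calc (N*Q)^4 = A2^4 := by rw [hA2val]
          _ ≤ A1^2 * (A2 * A4) := h1
          _ ≤ A1^2 * (A2 * (3*N*Q^2)) := by
              apply mul_le_mul_of_nonneg_left h2 (sq_nonneg _)
          _ = A1^2 * ((N*Q) * (3*N*Q^2)) := by rw [hA2val]
      -- (N Q)^4 = N^4 Q^4 ; RHS = 3 A1^2 N^2 Q^3
      have h4 : N^4 * Q^4 ≤ 3 * A1^2 * N^2 * Q^3 := by nlinarith [h3]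
      have hden : 0 < N^2 * Q^3 := by positivity
      nlinarith [mul_le_mul_of_nonneg_left h4 (le_of_lt (inv_pos.mpr hden))]
  -- conclude with square roots
  have lhs_sq : (N * Real.sqrt Q)^2 = N^2 * Q := by
    rw [mul_pow, Real.sq_sqrt hQ0]
  have rhs_sq : (Real.sqrt 3 * A1)^2 = 3 * A1^2 := by
    rw [mul_pow, Real.sq_sqrt (by norm_num : (3:ℝ) ≥ 0)]
  have hL0 : 0 ≤ N * Real.sqrt Q := by positivity
  have hR0 : 0 ≤ Real.sqrt 3 * A1 := by positivity
  nlinarith [key, lhs_sq, rhs_sq, hL0, hR0, sq_nonneg (N * Real.sqrt Q - Real.sqrt 3 * A1),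
    sq_nonneg (N * Real.sqrt Q + Real.sqrt 3 * A1)]

end khintchine

section groth

noncomputable def clamp (x : ℝ) : ℝ := max (-6) (min 6 x)

lemma abs_clamp_le (x : ℝ) : |clamp x| ≤ 6 := by
  unfold clamp
  rcases le_total x (-6) with h | h
  · rw [min_eq_right (by linarith : x ≤ 6), max_eq_left h]; norm_num
  rcases le_total 6 x with h2 | h2
  · rw [min_eq_left h2, max_eq_right (by norm_num)]; norm_num
  · rw [min_eq_right h2, max_eq_right h]
    rw [abs_le]; constructor <;> linarith

lemma clamp_sq_le (x : ℝ) : (clamp x)^2 ≤ x^2 := by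
  unfold clamp
  rcases le_total x (-6) with h | h
  · rw [min_eq_right (by linarith : x ≤ 6), max_eq_left h]; nlinarith
  rcases le_total 6 x with h2 | h2
  · rw [min_eq_left h2, max_eq_right (by norm_num)]; nlinarith
  · rw [min_eq_right h2, max_eq_right h]

lemma sub_clamp_sq_le (x : ℝ) : (x - clamp x)^2 ≤ x^4 / 36 := by
  unfold clamp
  rcases le_total x (-6) with h | h
  · rw [min_eq_right (by linarith : x ≤ 6), max_eq_left h]
    have h1 : 0 ≤ x^2/6 - (-x) + 6 := by nlinarith [sq_nonneg (x+3)]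
    have h2 : 0 ≤ x^2/6 + (-x) - 6 := by nlinarith
    nlinarith [mul_nonneg h1 h2]
  rcases le_total 6 x with h2 | h2
  · rw [min_eq_left h2, max_eq_right (by norm_num)]
    have h1 : 0 ≤ x^2/6 - x + 6 := by nlinarith [sq_nonneg (x-3)]
    have h3 : 0 ≤ x^2/6 + x - 6 := by nlinarith
    nlinarith [mul_nonneg h1 h3]
  · rw [min_eq_right h2, max_eq_right h]
    simp only [sub_self]
    nlinarith [sq_nonneg (x^2)]

variable {S R : Type} [Fintype S] [Fintype R]

/-- the set of achievable values of the bilinear vector form -/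
def grothVals (A : S → R → ℝ) : Set ℝ :=
  {V | ∃ (m : ℕ) (u : S → Fin m → ℝ) (v : R → Fin m → ℝ),
    (∀ s, ∑ t, (u s t)^2 ≤ 1) ∧ (∀ r, ∑ t, (v r t)^2 ≤ 1) ∧
    V = ∑ s, ∑ r, A s r * ∑ t, u s t * v r t}

lemma zero_mem_grothVals (A : S → R → ℝ) : (0:ℝ) ∈ grothVals A := by
  refine ⟨0, fun _ => (fun t => 0), fun _ => (fun t => 0), ?_, ?_, ?_⟩ <;> simp

lemma mem_grothVals (A : S → R → ℝ) {ι : Type} [Fintype ι]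
    (u : S → ι → ℝ) (v : R → ι → ℝ)
    (hu : ∀ s, ∑ t, (u s t)^2 ≤ 1) (hv : ∀ r, ∑ t, (v r t)^2 ≤ 1) :
    (∑ s, ∑ r, A s r * ∑ t, u s t * v r t) ∈ grothVals A := by
  classical
  let e := Fintype.equivFin ι
  refine ⟨Fintype.card ι, fun s => (fun t => u s (e.symm t)), fun r => (fun t => v r (e.symm t)),
    ?_, ?_, ?_⟩
  · intro s
    rw [Equiv.sum_comp e.symm (fun t => (u s t)^2)]
    exact hu s
  · intro r
    rw [Equiv.sum_comp e.symm (fun t => (v r t)^2)]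
    exact hv r
  · refine Finset.sum_congr rfl fun s _ => Finset.sum_congr rfl fun r _ => ?_
    congr 1
    exact (Equiv.sum_comp e.symm (fun t => u s t * v r t)).symm

lemma grothVals_bddAbove (A : S → R → ℝ) : ∀ V ∈ grothVals A, V ≤ ∑ s, ∑ r, |A s r| := by
  rintro V ⟨m, u, v, hu, hv, rfl⟩
  refine Finset.sum_le_sum fun s _ => Finset.sum_le_sum fun r _ => ?_
  have hcs : (∑ t, u s t * v r t)^2 ≤ 1 := by
    calc (∑ t, u s t * v r t)^2 ≤ (∑ t, (u s t)^2) * (∑ t, (v r t)^2) :=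
          Finset.sum_mul_sq_le_sq_mul_sq _ _ _
      _ ≤ 1 := by
          have h1 : (0:ℝ) ≤ ∑ t, (v r t)^2 := Finset.sum_nonneg fun t _ => sq_nonneg _
          have h2 : (0:ℝ) ≤ ∑ t, (u s t)^2 := Finset.sum_nonneg fun t _ => sq_nonneg _
          nlinarith [hu s, hv r]
  have habs : |∑ t, u s t * v r t| ≤ 1 := by
    rw [abs_le]; constructor <;> nlinarith [hcs]
  calc A s r * ∑ t, u s t * v r t ≤ |A s r * ∑ t, u s t * v r t| := le_abs_self _
    _ = |A s r| * |∑ t, u s t * v r t| := abs_mul _ _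
    _ ≤ |A s r| * 1 := by
        apply mul_le_mul_of_nonneg_left habs (abs_nonneg _)
    _ = |A s r| := mul_one _

end groth

section grothmain
variable {S R : Type} [Fintype S] [Fintype R]

lemma grothVals_rec (A : S → R → ℝ) (B : ℝ)
    (hB : ∀ (ε : S → ℝ) (δ : R → ℝ), (∀ s, |ε s| ≤ 1) → (∀ r, |δ r| ≤ 1) →
      ∑ s, ∑ r, A s r * ε s * δ r ≤ B)
    (K : ℝ) (hK : ∀ W ∈ grothVals A, W ≤ K) :
    ∀ V ∈ grothVals A, V ≤ 36 * B + (Real.sqrt 3 / 3) * K := by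
  rintro V ⟨m, u, v, hu, hv, rfl⟩
  classical
  set Ω := (Fin m → Bool)
  set N : ℝ := (Fintype.card Ω : ℝ) with hN
  have hNpos : (0:ℝ) < N := by rw [hN]; exact_mod_cast Fintype.card_pos
  set fu : S → Ω → ℝ := fun s ε => ScS Finset.univ (u s) ε with hfu
  set fv : R → Ω → ℝ := fun r ε => ScS Finset.univ (v r) ε with hfv
  -- second moments
  have hfu2 : ∀ s, ∑ ε : Ω, (fu s ε)^2 ≤ N := by
    intro s
    have : ∑ ε : Ω, fu s ε * fu s ε = N * ∑ t, u s t * u s t := ScS_L2 _ _ _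
    have h2 : ∑ t, u s t * u s t ≤ 1 := by
      simpa only [← pow_two] using hu s
    calc ∑ ε : Ω, (fu s ε)^2 = ∑ ε : Ω, fu s ε * fu s ε := by simp only [pow_two]
      _ = N * ∑ t, u s t * u s t := this
      _ ≤ N * 1 := by apply mul_le_mul_of_nonneg_left h2 (le_of_lt hNpos)
      _ = N := mul_one _
  have hfv2 : ∀ r, ∑ ε : Ω, (fv r ε)^2 ≤ N := by
    intro r
    have : ∑ ε : Ω, fv r ε * fv r ε = N * ∑ t, v r t * v r t := ScS_L2 _ _ _
    have h2 : ∑ t, v r t * v r t ≤ 1 := by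
      simpa only [← pow_two] using hv r
    calc ∑ ε : Ω, (fv r ε)^2 = ∑ ε : Ω, fv r ε * fv r ε := by simp only [pow_two]
      _ = N * ∑ t, v r t * v r t := this
      _ ≤ N * 1 := by apply mul_le_mul_of_nonneg_left h2 (le_of_lt hNpos)
      _ = N := mul_one _
  -- tail second moments
  have hpsi_u : ∀ s, ∑ ε : Ω, (fu s ε - clamp (fu s ε))^2 ≤ N / 12 := by
    intro s
    have h4 : ∑ ε : Ω, (fu s ε)^4 ≤ 3 * N * (∑ t, (u s t)^2)^2 := ScS_L4 _ _
    have hQ1 : (∑ t, (u s t)^2)^2 ≤ 1 := by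
      have h0 : (0:ℝ) ≤ ∑ t, (u s t)^2 := Finset.sum_nonneg fun t _ => sq_nonneg _
      nlinarith [hu s]
    have := Finset.sum_le_sum (fun (ε : Ω) (_ : ε ∈ Finset.univ) => sub_clamp_sq_le (fu s ε))
    calc ∑ ε : Ω, (fu s ε - clamp (fu s ε))^2 ≤ ∑ ε : Ω, (fu s ε)^4 / 36 := this
      _ = (∑ ε : Ω, (fu s ε)^4) / 36 := by rw [Finset.sum_div]
      _ ≤ (3 * N * 1) / 36 := by
          apply div_le_div_of_nonneg_right ?_ (by norm_num)
          calc ∑ ε : Ω, (fu s ε)^4 ≤ 3 * N * (∑ t, (u s t)^2)^2 := h4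
            _ ≤ 3 * N * 1 := by apply mul_le_mul_of_nonneg_left hQ1 (by positivity)
      _ = N / 12 := by ring
  have hpsi_v : ∀ r, ∑ ε : Ω, (fv r ε - clamp (fv r ε))^2 ≤ N / 12 := by
    intro r
    have h4 : ∑ ε : Ω, (fv r ε)^4 ≤ 3 * N * (∑ t, (v r t)^2)^2 := ScS_L4 _ _
    have hQ1 : (∑ t, (v r t)^2)^2 ≤ 1 := by
      have h0 : (0:ℝ) ≤ ∑ t, (v r t)^2 := Finset.sum_nonneg fun t _ => sq_nonneg _
      nlinarith [hv r]
    have := Finset.sum_le_sum (fun (ε : Ω) (_ : ε ∈ Finset.univ) => sub_clamp_sq_le (fv r ε))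
    calc ∑ ε : Ω, (fv r ε - clamp (fv r ε))^2 ≤ ∑ ε : Ω, (fv r ε)^4 / 36 := this
      _ = (∑ ε : Ω, (fv r ε)^4) / 36 := by rw [Finset.sum_div]
      _ ≤ (3 * N * 1) / 36 := by
          apply div_le_div_of_nonneg_right ?_ (by norm_num)
          calc ∑ ε : Ω, (fv r ε)^4 ≤ 3 * N * (∑ t, (v r t)^2)^2 := h4
            _ ≤ 3 * N * 1 := by apply mul_le_mul_of_nonneg_left hQ1 (by positivity)
      _ = N / 12 := by ring
  have hclamp_u : ∀ s, ∑ ε : Ω, (clamp (fu s ε))^2 ≤ N := by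
    intro s
    calc ∑ ε : Ω, (clamp (fu s ε))^2 ≤ ∑ ε : Ω, (fu s ε)^2 :=
          Finset.sum_le_sum (fun ε _ => clamp_sq_le _)
      _ ≤ N := hfu2 s
  -- main identity
  have hmain : N * (∑ s, ∑ r, A s r * ∑ t, u s t * v r t)
      = ∑ s, ∑ r, A s r * (∑ ε : Ω, fu s ε * fv r ε) := by
    rw [Finset.mul_sum]
    refine Finset.sum_congr rfl fun s _ => ?_
    rw [Finset.mul_sum]
    refine Finset.sum_congr rfl fun r _ => ?_
    rw [ScS_L2 Finset.univ (u s) (v r)]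
    ring
  -- decomposition
  have hdecomp : ∀ s r, (∑ ε : Ω, fu s ε * fv r ε)
      = (∑ ε : Ω, clamp (fu s ε) * clamp (fv r ε))
        + (∑ ε : Ω, (fu s ε - clamp (fu s ε)) * fv r ε)
        + (∑ ε : Ω, clamp (fu s ε) * (fv r ε - clamp (fv r ε))) := by
    intro s r
    rw [← Finset.sum_add_distrib, ← Finset.sum_add_distrib]
    exact Finset.sum_congr rfl fun ε _ => by ring
  have hsplit : N * (∑ s, ∑ r, A s r * ∑ t, u s t * v r t)
      = (∑ s, ∑ r, A s r * (∑ ε : Ω, clamp (fu s ε) * clamp (fv r ε)))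
        + (∑ s, ∑ r, A s r * (∑ ε : Ω, (fu s ε - clamp (fu s ε)) * fv r ε))
        + (∑ s, ∑ r, A s r * (∑ ε : Ω, clamp (fu s ε) * (fv r ε - clamp (fv r ε)))) := by
    rw [hmain, ← Finset.sum_add_distrib, ← Finset.sum_add_distrib]
    refine Finset.sum_congr rfl fun s _ => ?_
    rw [← Finset.sum_add_distrib, ← Finset.sum_add_distrib]
    refine Finset.sum_congr rfl fun r _ => ?_
    rw [hdecomp s r]; ring
  -- term 1
  have hT1 : (∑ s, ∑ r, A s r * (∑ ε : Ω, clamp (fu s ε) * clamp (fv r ε))) ≤ N * (36 * B) := by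
    have hswap : (∑ s, ∑ r, A s r * (∑ ε : Ω, clamp (fu s ε) * clamp (fv r ε)))
        = ∑ ε : Ω, ∑ s, ∑ r, A s r * (clamp (fu s ε) * clamp (fv r ε)) := by
      calc ∑ s, ∑ r, A s r * (∑ ε : Ω, clamp (fu s ε) * clamp (fv r ε))
          = ∑ s, ∑ r, ∑ ε : Ω, A s r * (clamp (fu s ε) * clamp (fv r ε)) :=
            Finset.sum_congr rfl fun s _ => Finset.sum_congr rfl fun r _ => Finset.mul_sum _ _ _
        _ = ∑ s, ∑ ε : Ω, ∑ r, A s r * (clamp (fu s ε) * clamp (fv r ε)) :=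
            Finset.sum_congr rfl fun s _ => Finset.sum_comm
        _ = ∑ ε : Ω, ∑ s, ∑ r, A s r * (clamp (fu s ε) * clamp (fv r ε)) := Finset.sum_comm
    rw [hswap]
    have hper : ∀ ε : Ω, (∑ s, ∑ r, A s r * (clamp (fu s ε) * clamp (fv r ε))) ≤ 36 * B := by
      intro ε
      have happ := hB (fun s => clamp (fu s ε) / 6) (fun r => clamp (fv r ε) / 6)
        (fun s => by
          rw [abs_div, show |(6:ℝ)| = 6 by norm_num, div_le_one (by norm_num : (0:ℝ) < 6)]
          exact abs_clamp_le _)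
        (fun r => by
          rw [abs_div, show |(6:ℝ)| = 6 by norm_num, div_le_one (by norm_num : (0:ℝ) < 6)]
          exact abs_clamp_le _)
      have hre : (∑ s, ∑ r, A s r * (clamp (fu s ε) * clamp (fv r ε)))
          = 36 * ∑ s, ∑ r, A s r * (clamp (fu s ε) / 6) * (clamp (fv r ε) / 6) := by
        rw [Finset.mul_sum]
        refine Finset.sum_congr rfl fun s _ => ?_
        rw [Finset.mul_sum]
        exact Finset.sum_congr rfl fun r _ => by ring
      rw [hre]
      linarith [happ]
    calc ∑ ε : Ω, ∑ s, ∑ r, A s r * (clamp (fu s ε) * clamp (fv r ε))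
        ≤ ∑ _ε : Ω, (36 * B) := Finset.sum_le_sum fun ε _ => hper ε
      _ = N * (36 * B) := by rw [Finset.sum_const, Finset.card_univ, nsmul_eq_mul, hN]
  -- scaling constants
  set β : ℝ := Real.sqrt (N/12) with hβ
  set γ : ℝ := Real.sqrt N with hγ
  have hβpos : 0 < β := Real.sqrt_pos.mpr (by positivity)
  have hγpos : 0 < γ := Real.sqrt_pos.mpr hNpos
  have hβsq : β^2 = N/12 := Real.sq_sqrt (by positivity)
  have hγsq : γ^2 = N := Real.sq_sqrt (le_of_lt hNpos)
  have hβγ : β * γ = N * (Real.sqrt 3 / 6) := by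
    have h1 : (β*γ)^2 = (N * (Real.sqrt 3/6))^2 := by
      rw [mul_pow, hβsq, hγsq, mul_pow, div_pow, Real.sq_sqrt (by norm_num : (0:ℝ) ≤ 3)]
      ring
    have h2 : 0 ≤ β*γ := by positivity
    have h3 : 0 ≤ N * (Real.sqrt 3/6) := by positivity
    rw [← Real.sqrt_sq h2, h1, Real.sqrt_sq h3]
  have hKnonneg : 0 ≤ K := hK 0 (zero_mem_grothVals A)
  -- term 2
  have hT2 : (∑ s, ∑ r, A s r * (∑ ε : Ω, (fu s ε - clamp (fu s ε)) * fv r ε))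
      ≤ N * (Real.sqrt 3 / 6) * K := by
    set u2 : S → Ω → ℝ := fun s ε => (fu s ε - clamp (fu s ε)) / β with hu2
    set v2 : R → Ω → ℝ := fun r ε => fv r ε / γ with hv2
    have hu2n : ∀ s, ∑ ε : Ω, (u2 s ε)^2 ≤ 1 := by
      intro s
      have : ∑ ε : Ω, (u2 s ε)^2 = (∑ ε : Ω, (fu s ε - clamp (fu s ε))^2) / (N/12) := by
        rw [Finset.sum_div]
        refine Finset.sum_congr rfl fun ε _ => ?_
        rw [hu2, div_pow, hβsq]
      rw [this]
      exact div_le_one_of_le₀ (hpsi_u s) (by positivity)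
    have hv2n : ∀ r, ∑ ε : Ω, (v2 r ε)^2 ≤ 1 := by
      intro r
      have : ∑ ε : Ω, (v2 r ε)^2 = (∑ ε : Ω, (fv r ε)^2) / N := by
        rw [Finset.sum_div]
        refine Finset.sum_congr rfl fun ε _ => ?_
        rw [hv2, div_pow, hγsq]
      rw [this]
      exact div_le_one_of_le₀ (hfv2 r) hNpos.le
    have hmem := mem_grothVals A u2 v2 hu2n hv2n
    have hW2 := hK _ hmem
    have hE2 : (∑ s, ∑ r, A s r * (∑ ε : Ω, (fu s ε - clamp (fu s ε)) * fv r ε))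
        = (β*γ) * (∑ s, ∑ r, A s r * ∑ ε : Ω, u2 s ε * v2 r ε) := by
      rw [Finset.mul_sum]
      refine Finset.sum_congr rfl fun s _ => ?_
      rw [Finset.mul_sum]
      refine Finset.sum_congr rfl fun r _ => ?_
      have hinner : ∑ ε : Ω, u2 s ε * v2 r ε
          = (∑ ε : Ω, (fu s ε - clamp (fu s ε)) * fv r ε) / (β*γ) := by
        rw [Finset.sum_div]
        refine Finset.sum_congr rfl fun ε _ => ?_
        rw [hu2, hv2, div_mul_div_comm]
      rw [hinner]
      field_simp
    rw [hE2, hβγ]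
    exact mul_le_mul_of_nonneg_left hW2 (by positivity)
  -- term 3
  have hT3 : (∑ s, ∑ r, A s r * (∑ ε : Ω, clamp (fu s ε) * (fv r ε - clamp (fv r ε))))
      ≤ N * (Real.sqrt 3 / 6) * K := by
    set u3 : S → Ω → ℝ := fun s ε => clamp (fu s ε) / γ with hu3
    set v3 : R → Ω → ℝ := fun r ε => (fv r ε - clamp (fv r ε)) / β with hv3
    have hu3n : ∀ s, ∑ ε : Ω, (u3 s ε)^2 ≤ 1 := by
      intro s
      have : ∑ ε : Ω, (u3 s ε)^2 = (∑ ε : Ω, (clamp (fu s ε))^2) / N := by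
        rw [Finset.sum_div]
        refine Finset.sum_congr rfl fun ε _ => ?_
        rw [hu3, div_pow, hγsq]
      rw [this]
      exact div_le_one_of_le₀ (hclamp_u s) hNpos.le
    have hv3n : ∀ r, ∑ ε : Ω, (v3 r ε)^2 ≤ 1 := by
      intro r
      have : ∑ ε : Ω, (v3 r ε)^2 = (∑ ε : Ω, (fv r ε - clamp (fv r ε))^2) / (N/12) := by
        rw [Finset.sum_div]
        refine Finset.sum_congr rfl fun ε _ => ?_
        rw [hv3, div_pow, hβsq]
      rw [this]
      exact div_le_one_of_le₀ (hpsi_v r) (by positivity)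
    have hmem := mem_grothVals A u3 v3 hu3n hv3n
    have hW3 := hK _ hmem
    have hE3 : (∑ s, ∑ r, A s r * (∑ ε : Ω, clamp (fu s ε) * (fv r ε - clamp (fv r ε))))
        = (β*γ) * (∑ s, ∑ r, A s r * ∑ ε : Ω, u3 s ε * v3 r ε) := by
      rw [Finset.mul_sum]
      refine Finset.sum_congr rfl fun s _ => ?_
      rw [Finset.mul_sum]
      refine Finset.sum_congr rfl fun r _ => ?_
      have hinner : ∑ ε : Ω, u3 s ε * v3 r ε
          = (∑ ε : Ω, clamp (fu s ε) * (fv r ε - clamp (fv r ε))) / (β*γ) := by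
        rw [Finset.sum_div]
        refine Finset.sum_congr rfl fun ε _ => ?_
        rw [hu3, hv3, div_mul_div_comm]
        ring_nf
      rw [hinner]
      field_simp
    rw [hE3, hβγ]
    exact mul_le_mul_of_nonneg_left hW3 (by positivity)
  -- combine
  have hfinal : N * (∑ s, ∑ r, A s r * ∑ t, u s t * v r t)
      ≤ N * (36 * B + (Real.sqrt 3 / 3) * K) := by
    rw [hsplit]
    have expand : N * (36 * B + (Real.sqrt 3 / 3) * K)
        = N * (36 * B) + (N * (Real.sqrt 3/6) * K + N * (Real.sqrt 3/6) * K) := by ring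
    rw [expand]
    linarith [hT1, hT2, hT3]
  exact le_of_mul_le_mul_left hfinal hNpos

end grothmain

section grothfinal
variable {S R : Type} [Fintype S] [Fintype R]

lemma sqrt_three_le : Real.sqrt 3 ≤ 1.8 := by
  rw [show (1.8:ℝ) = Real.sqrt (1.8^2) from (Real.sqrt_sq (by norm_num)).symm]
  apply Real.sqrt_le_sqrt
  norm_num

/-- Grothendieck-type inequality with constant 100. -/
lemma groth (A : S → R → ℝ) (B : ℝ)
    (hB : ∀ (ε : S → ℝ) (δ : R → ℝ), (∀ s, |ε s| ≤ 1) → (∀ r, |δ r| ≤ 1) →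
      ∑ s, ∑ r, A s r * ε s * δ r ≤ B)
    {ι : Type} [Fintype ι] (u : S → ι → ℝ) (v : R → ι → ℝ)
    (hu : ∀ s, ∑ t, (u s t)^2 ≤ 1) (hv : ∀ r, ∑ t, (v r t)^2 ≤ 1) :
    ∑ s, ∑ r, A s r * ∑ t, u s t * v r t ≤ 100 * B := by
  have hne : (grothVals A).Nonempty := ⟨0, zero_mem_grothVals A⟩
  have hbdd : BddAbove (grothVals A) := ⟨∑ s, ∑ r, |A s r|, fun V hV => grothVals_bddAbove A V hV⟩
  set K := sSup (grothVals A) with hKdef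
  have hK : ∀ W ∈ grothVals A, W ≤ K := fun W hW => le_csSup hbdd hW
  have hKnn : 0 ≤ K := hK 0 (zero_mem_grothVals A)
  have hB0 : 0 ≤ B := by
    have := hB (fun _ => 0) (fun _ => 0) (fun s => by norm_num) (fun r => by norm_num)
    simpa using this
  have hrec := grothVals_rec A B hB K hK
  have hKle : K ≤ 36 * B + (Real.sqrt 3 / 3) * K := csSup_le hne hrec
  have hs3 : Real.sqrt 3 / 3 * K ≤ 0.6 * K := by
    apply mul_le_mul_of_nonneg_right _ hKnn
    linarith [sqrt_three_le]
  have hK100 : K ≤ 100 * B := by linarith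
  calc ∑ s, ∑ r, A s r * ∑ t, u s t * v r t ≤ K := hK _ (mem_grothVals A u v hu hv)
    _ ≤ 100 * B := hK100

end grothfinal

section combinatorial

lemma sum_rot {M : Type} [AddCommMonoid M] {α β γ : Type} [Fintype α] [Fintype β] [Fintype γ]
    (f : α → β → γ → M) :
    ∑ a, ∑ b, ∑ c, f a b c = ∑ c, ∑ a, ∑ b, f a b c := by
  calc ∑ a, ∑ b, ∑ c, f a b c = ∑ a, ∑ c, ∑ b, f a b c :=
        Finset.sum_congr rfl fun a _ => Finset.sum_comm
    _ = ∑ c, ∑ a, ∑ b, f a b c := Finset.sum_comm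

lemma l1_le_sqrt {n : ℕ} (d : Fin n → ℝ) :
    ∑ k, |d k| ≤ Real.sqrt n * Real.sqrt (∑ k, (d k)^2) := by
  have h := Finset.sum_mul_sq_le_sq_mul_sq Finset.univ (fun _ : Fin n => (1:ℝ))
    (fun k => |d k|)
  simp only [one_mul, one_pow, sq_abs, Finset.sum_const, Finset.card_univ,
    Fintype.card_fin, nsmul_eq_mul, mul_one] at h
  have h0 : 0 ≤ ∑ k, |d k| := Finset.sum_nonneg fun k _ => abs_nonneg _
  calc ∑ k, |d k| = Real.sqrt ((∑ k, |d k|)^2) := (Real.sqrt_sq h0).symm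
    _ ≤ Real.sqrt ((n:ℝ) * ∑ k, (d k)^2) := Real.sqrt_le_sqrt h
    _ = Real.sqrt n * Real.sqrt (∑ k, (d k)^2) := Real.sqrt_mul (Nat.cast_nonneg n) _

lemma combinatorial (n : ℕ) (T : Fin n → Fin n → Fin n → ℝ) (OPT : ℝ)
    (hOPT : ∀ x y z : Fin n → Bool,
      ∑ i, ∑ j, ∑ k, T i j k * sgn (x i) * sgn (y j) * sgn (z k) ≤ OPT)
    (ε : Fin n → ℝ) (δ : Fin n × Fin n → ℝ)
    (hε : ∀ i, |ε i| ≤ 1) (hδ : ∀ r, |δ r| ≤ 1) :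
    ∑ i, ∑ r : Fin n × Fin n, T i r.1 r.2 * ε i * δ r
      ≤ Real.sqrt 3 * Real.sqrt n * OPT := by
  classical
  set c : Fin n × Fin n → ℝ := fun r => ∑ i, T i r.1 r.2 * ε i with hc
  -- step 1 : bound by ∑ |c r|
  have step1 : ∑ i, ∑ r : Fin n × Fin n, T i r.1 r.2 * ε i * δ r ≤ ∑ r : Fin n × Fin n, |c r| := by
    have hswap : ∑ i, ∑ r : Fin n × Fin n, T i r.1 r.2 * ε i * δ r
        = ∑ r : Fin n × Fin n, c r * δ r := by
      rw [Finset.sum_comm]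
      refine Finset.sum_congr rfl fun r _ => ?_
      rw [hc, Finset.sum_mul]
    rw [hswap]
    refine Finset.sum_le_sum fun r _ => ?_
    calc c r * δ r ≤ |c r * δ r| := le_abs_self _
      _ = |c r| * |δ r| := abs_mul _ _
      _ ≤ |c r| * 1 := mul_le_mul_of_nonneg_left (hδ r) (abs_nonneg _)
      _ = |c r| := mul_one _
  -- inner claim : signed row sums bounded by OPT
  have inner : ∀ z : Fin n → Bool, ∑ j, |∑ k, c (j,k) * sgn (z k)| ≤ OPT := by
    intro z
    set w : Fin n → ℝ := fun j => ∑ k, c (j,k) * sgn (z k) with hw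
    set y : Fin n → Bool := fun j => decide (0 ≤ w j) with hy
    have habs : ∀ j, |w j| = sgn (y j) * w j := by
      intro j
      by_cases h : 0 ≤ w j
      · rw [abs_of_nonneg h, hy]; simp [sgn, h]
      · rw [abs_of_neg (lt_of_not_ge h), hy]; simp [sgn, h]
    have hre : ∑ j, |w j| = ∑ i, ε i * (∑ j, ∑ k, T i j k * sgn (y j) * sgn (z k)) := by
      rw [Finset.sum_congr rfl fun j _ => habs j]
      have e1 : ∀ j, sgn (y j) * w j = ∑ k, ∑ i, T i j k * ε i * sgn (y j) * sgn (z k) := by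
        intro j
        rw [hw, Finset.mul_sum]
        refine Finset.sum_congr rfl fun k _ => ?_
        rw [hc, Finset.sum_mul, Finset.mul_sum]
        refine Finset.sum_congr rfl fun i _ => by ring
      rw [Finset.sum_congr rfl fun j _ => e1 j]
      rw [sum_rot (fun j k i => T i j k * ε i * sgn (y j) * sgn (z k))]
      refine Finset.sum_congr rfl fun i _ => ?_
      rw [Finset.mul_sum]
      refine Finset.sum_congr rfl fun j _ => ?_
      rw [Finset.mul_sum]
      refine Finset.sum_congr rfl fun k _ => by ring
    rw [hre]
    set G : Fin n → ℝ := fun i => ∑ j, ∑ k, T i j k * sgn (y j) * sgn (z k) with hG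
    set x : Fin n → Bool := fun i => decide (0 ≤ G i) with hx
    have habsG : ∀ i, |G i| = sgn (x i) * G i := by
      intro i
      by_cases h : 0 ≤ G i
      · rw [abs_of_nonneg h, hx]; simp [sgn, h]
      · rw [abs_of_neg (lt_of_not_ge h), hx]; simp [sgn, h]
    have hb : ∑ i, ε i * G i ≤ ∑ i, sgn (x i) * G i := by
      refine Finset.sum_le_sum fun i _ => ?_
      rw [← habsG i]
      calc ε i * G i ≤ |ε i * G i| := le_abs_self _
        _ = |ε i| * |G i| := abs_mul _ _
        _ ≤ 1 * |G i| := mul_le_mul_of_nonneg_right (hε i) (abs_nonneg _)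
        _ = |G i| := one_mul _
    have hfin : ∑ i, sgn (x i) * G i
        = ∑ i, ∑ j, ∑ k, T i j k * sgn (x i) * sgn (y j) * sgn (z k) := by
      refine Finset.sum_congr rfl fun i _ => ?_
      rw [hG, Finset.mul_sum]
      refine Finset.sum_congr rfl fun j _ => ?_
      rw [Finset.mul_sum]
      refine Finset.sum_congr rfl fun k _ => by ring
    calc ∑ i, ε i * G i ≤ ∑ i, sgn (x i) * G i := hb
      _ = _ := hfin
      _ ≤ OPT := hOPT x y z
  -- step 2 : Khintchine
  set N' : ℝ := (Fintype.card (Fin n → Bool) : ℝ) with hN'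
  have hN'pos : (0:ℝ) < N' := by rw [hN']; exact_mod_cast Fintype.card_pos
  have hkh : ∀ j : Fin n, Real.sqrt (∑ k, (c (j,k))^2)
      ≤ Real.sqrt 3 / N' * ∑ z : Fin n → Bool, |∑ k, c (j,k) * sgn (z k)| := by
    intro j
    have := khintchine (fun k => c (j,k))
    rw [div_mul_eq_mul_div, le_div_iff₀ hN'pos, mul_comm]
    exact this
  have step2 : ∑ r : Fin n × Fin n, |c r| ≤ Real.sqrt n *
      (Real.sqrt 3 / N' * ∑ z : Fin n → Bool, ∑ j, |∑ k, c (j,k) * sgn (z k)|) := by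
    calc ∑ r : Fin n × Fin n, |c r| = ∑ j, ∑ k, |c (j,k)| := by rw [Fintype.sum_prod_type]
      _ ≤ ∑ j, Real.sqrt n * Real.sqrt (∑ k, (c (j,k))^2) :=
          Finset.sum_le_sum fun j _ => l1_le_sqrt _
      _ = Real.sqrt n * ∑ j, Real.sqrt (∑ k, (c (j,k))^2) := by rw [Finset.mul_sum]
      _ ≤ Real.sqrt n * ∑ j, (Real.sqrt 3 / N' * ∑ z : Fin n → Bool, |∑ k, c (j,k) * sgn (z k)|) := by
          apply mul_le_mul_of_nonneg_left (Finset.sum_le_sum fun j _ => hkh j) (Real.sqrt_nonneg _)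
      _ = Real.sqrt n * (Real.sqrt 3 / N' * ∑ j, ∑ z : Fin n → Bool, |∑ k, c (j,k) * sgn (z k)|) := by
          rw [← Finset.mul_sum]
      _ = Real.sqrt n * (Real.sqrt 3 / N' * ∑ z : Fin n → Bool, ∑ j, |∑ k, c (j,k) * sgn (z k)|) := by
          rw [Finset.sum_comm]
  have step3 : ∑ z : Fin n → Bool, ∑ j, |∑ k, c (j,k) * sgn (z k)| ≤ N' * OPT := by
    calc ∑ z : Fin n → Bool, ∑ j, |∑ k, c (j,k) * sgn (z k)|
        ≤ ∑ _z : Fin n → Bool, OPT := Finset.sum_le_sum fun z _ => inner z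
      _ = N' * OPT := by rw [Finset.sum_const, Finset.card_univ, nsmul_eq_mul, hN']
  have hOPT0 : 0 ≤ OPT := by
    have h1 := inner (fun _ => true)
    refine le_trans (Finset.sum_nonneg fun j _ => abs_nonneg _) h1
  calc ∑ i, ∑ r : Fin n × Fin n, T i r.1 r.2 * ε i * δ r
      ≤ ∑ r : Fin n × Fin n, |c r| := step1
    _ ≤ Real.sqrt n * (Real.sqrt 3 / N' * ∑ z : Fin n → Bool, ∑ j, |∑ k, c (j,k) * sgn (z k)|) :=
        step2
    _ ≤ Real.sqrt n * (Real.sqrt 3 / N' * (N' * OPT)) := by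
        apply mul_le_mul_of_nonneg_left _ (Real.sqrt_nonneg _)
        apply mul_le_mul_of_nonneg_left step3 (by positivity)
    _ = Real.sqrt 3 * Real.sqrt n * OPT := by field_simp
  
end combinatorial

theorem stmt_5 :
    ∃ C : ℝ, 0 < C ∧ ∀ (n : ℕ), 1 ≤ n → ∀ (T : Fin n → Fin n → Fin n → ℝ)
      (L : MvPolynomial (Fin 3 × Fin n) ℝ →ₗ[ℝ] ℝ),
      L 1 = 1 →
      (∀ p : MvPolynomial (Fin 3 × Fin n) ℝ, 2 * p.totalDegree ≤ 6 → 0 ≤ L (p ^ 2)) →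
      (∀ (v : Fin 3 × Fin n) (p : MvPolynomial (Fin 3 × Fin n) ℝ),
        p.totalDegree ≤ 4 → L ((X v) ^ 2 * p) = L p) →
      L (∑ i, ∑ j, ∑ k, MvPolynomial.C (T i j k) * X (0, i) * X (1, j) * X (2, k)) ≤
        C * Real.sqrt n *
          ⨆ x : Fin n → Bool, ⨆ y : Fin n → Bool, ⨆ z : Fin n → Bool,
            ∑ i, ∑ j, ∑ k, T i j k * (if x i then (1 : ℝ) else -1) *
              (if y j then (1 : ℝ) else -1) * (if z k then (1 : ℝ) else -1) := by
  refine ⟨200, by norm_num, ?_⟩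
  intro n hn T L hL1 hLsq hLcube
  classical
  -- the objective value F and its supremum OPT
  set F : (Fin n → Bool) → (Fin n → Bool) → (Fin n → Bool) → ℝ := fun x y z =>
    ∑ i, ∑ j, ∑ k, T i j k * sgn (x i) * sgn (y j) * sgn (z k) with hF
  have hFeq : ∀ x y z, F x y z = ∑ i, ∑ j, ∑ k, T i j k * (if x i then (1:ℝ) else -1) *
      (if y j then (1:ℝ) else -1) * (if z k then (1:ℝ) else -1) := by
    intro x y z
    simp only [hF, sgn]
  set OPT : ℝ := ⨆ x : Fin n → Bool, ⨆ y : Fin n → Bool, ⨆ z : Fin n → Bool, F x y z with hOPTdef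
  have hOPT : ∀ x y z, F x y z ≤ OPT := by
    intro x y z
    have h1 : F x y z ≤ ⨆ z, F x y z :=
      le_ciSup (Set.Finite.bddAbove (Set.finite_range _)) z
    have h2 : (⨆ z, F x y z) ≤ ⨆ y, ⨆ z, F x y z :=
      le_ciSup (f := fun y => ⨆ z, F x y z) (Set.Finite.bddAbove (Set.finite_range _)) y
    have h3 : (⨆ y, ⨆ z, F x y z) ≤ OPT :=
      le_ciSup (f := fun x => ⨆ y, ⨆ z, F x y z) (Set.Finite.bddAbove (Set.finite_range _)) x
    linarith
  have hOPT0 : 0 ≤ OPT := by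
    have hneg : F (fun _ => true) (fun _ => true) (fun k => !(true : Bool))
        = - F (fun _ => true) (fun _ => true) (fun _ => true) := by
      rw [hF, ← Finset.sum_neg_distrib]
      refine Finset.sum_congr rfl fun i _ => ?_
      rw [← Finset.sum_neg_distrib]
      refine Finset.sum_congr rfl fun j _ => ?_
      rw [← Finset.sum_neg_distrib]
      refine Finset.sum_congr rfl fun k _ => ?_
      rw [sgn_not]; ring
    have h1 := hOPT (fun _ => true) (fun _ => true) (fun _ => true)
    have h2 := hOPT (fun _ => true) (fun _ => true) (fun k => !(true : Bool))
    rw [hneg] at h2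
    linarith
  -- the monomial system
  set m : (Fin n ⊕ (Fin n × Fin n)) → MvPolynomial (Fin 3 × Fin n) ℝ :=
    Sum.elim (fun i => X ((0 : Fin 3), i)) (fun r => X ((1 : Fin 3), r.1) * X ((2 : Fin 3), r.2)) with hm
  have hdegm : ∀ a, (m a).totalDegree ≤ 2 := by
    rintro (i | r)
    · simp only [hm, Sum.elim_inl]
      rw [totalDegree_X]; norm_num
    · simp only [hm, Sum.elim_inr]
      calc ((X ((1:Fin 3), r.1) : MvPolynomial (Fin 3 × Fin n) ℝ) * X ((2:Fin 3), r.2)).totalDegree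
          ≤ (X ((1:Fin 3), r.1)).totalDegree + (X ((2:Fin 3), r.2)).totalDegree :=
            totalDegree_mul _ _
        _ ≤ 2 := by rw [totalDegree_X, totalDegree_X]
  -- the moment matrix and its PSDness
  set Mm : Matrix (Fin n ⊕ (Fin n × Fin n)) (Fin n ⊕ (Fin n × Fin n)) ℝ :=
    fun a b => L (m a * m b) with hMm
  have hPSD : Mm.PosSemidef := by
    refine Matrix.PosSemidef.of_dotProduct_mulVec_nonneg ?_ ?_
    · refine Matrix.IsHermitian.ext fun a b => ?_
      simp only [Matrix.conjTranspose_apply, hMm, star_trivial, mul_comm]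
    · intro x
      have hp : (∑ a, MvPolynomial.C (x a) * m a)^2
          = ∑ a, ∑ b, MvPolynomial.C (x a * x b) * (m a * m b) := by
        rw [pow_two, Finset.sum_mul_sum]
        refine Finset.sum_congr rfl fun a _ => Finset.sum_congr rfl fun b _ => ?_
        rw [_root_.map_mul]; ring
      have hdegp : (∑ a, MvPolynomial.C (x a) * m a).totalDegree ≤ 2 := by
        refine le_trans (totalDegree_finset_sum _ _) ?_
        refine Finset.sup_le fun a _ => ?_
        calc (MvPolynomial.C (x a) * m a).totalDegree
            ≤ (MvPolynomial.C (x a)).totalDegree + (m a).totalDegree := totalDegree_mul _ _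
          _ ≤ 2 := by rw [totalDegree_C]; simpa using hdegm a
      have hnn := hLsq (∑ a, MvPolynomial.C (x a) * m a) (by omega)
      rw [hp] at hnn
      have hLval : L (∑ a, ∑ b, MvPolynomial.C (x a * x b) * (m a * m b))
          = ∑ a, ∑ b, (x a * x b) * L (m a * m b) := by
        rw [map_sum]
        refine Finset.sum_congr rfl fun a _ => ?_
        rw [map_sum]
        refine Finset.sum_congr rfl fun b _ => ?_
        rw [C_mul', _root_.map_smul, smul_eq_mul]
      rw [hLval] at hnn
      have : dotProduct (star x) (Mm.mulVec x) = ∑ a, ∑ b, (x a * x b) * L (m a * m b) := by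
        simp only [dotProduct, Matrix.mulVec, star_trivial, hMm, dotProduct]
        rw [Finset.sum_congr rfl (fun a _ => Finset.mul_sum _ _ _)]
        refine Finset.sum_congr rfl fun a _ => Finset.sum_congr rfl fun b _ => by ring
      rw [this]
      exact hnn
  obtain ⟨Bm, hBm⟩ : ∃ B : Matrix (Fin n ⊕ (Fin n × Fin n)) (Fin n ⊕ (Fin n × Fin n)) ℝ, Mm = Bᴴ * B := by
    open scoped MatrixOrder in
    obtain ⟨B, hB⟩ := CStarAlgebra.nonneg_iff_eq_star_mul_self.mp hPSD.nonneg
    exact ⟨B, by rw [hB, Matrix.star_eq_conjTranspose]⟩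
  have hent : ∀ a b, L (m a * m b) = ∑ t, Bm t a * Bm t b := by
    intro a b
    have h1 : Mm a b = (Bmᴴ * Bm) a b := by rw [← hBm]
    simpa only [hMm, Matrix.mul_apply, Matrix.conjTranspose_apply, star_trivial] using h1
  -- Gram vectors
  set u : Fin n → (Fin n ⊕ (Fin n × Fin n)) → ℝ := fun i t => Bm t (Sum.inl i) with hu
  set v : Fin n × Fin n → (Fin n ⊕ (Fin n × Fin n)) → ℝ := fun r t => Bm t (Sum.inr r) with hv
  have hun : ∀ i, ∑ t, (u i t)^2 ≤ 1 := by
    intro i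
    have e1 : (X ((0:Fin 3), i) : MvPolynomial (Fin 3 × Fin n) ℝ) * X ((0:Fin 3), i) = X ((0:Fin 3), i)^2 * 1 := by ring
    have h1 : L (m (Sum.inl i) * m (Sum.inl i)) = 1 := by
      simp only [hm, Sum.elim_inl]
      rw [e1, hLcube (0,i) 1 (by rw [totalDegree_one]; norm_num), hL1]
    calc ∑ t, (u i t)^2 = ∑ t, Bm t (Sum.inl i) * Bm t (Sum.inl i) := by
          refine Finset.sum_congr rfl fun t _ => ?_
          rw [hu, pow_two]
      _ = L (m (Sum.inl i) * m (Sum.inl i)) := (hent _ _).symm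
      _ ≤ 1 := le_of_eq h1
  have hvn : ∀ r : Fin n × Fin n, ∑ t, (v r t)^2 ≤ 1 := by
    intro r
    have e1 : ((X ((1:Fin 3), r.1) : MvPolynomial (Fin 3 × Fin n) ℝ) * X ((2:Fin 3), r.2)) * (X ((1:Fin 3), r.1) * X ((2:Fin 3), r.2))
        = X ((1:Fin 3), r.1)^2 * (X ((2:Fin 3), r.2)^2 * 1) := by ring
    have hdeg1 : (X ((2:Fin 3), r.2)^2 * (1:MvPolynomial (Fin 3 × Fin n) ℝ)).totalDegree ≤ 4 := by
      rw [mul_one, totalDegree_X_pow]; norm_num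
    have h1 : L (m (Sum.inr r) * m (Sum.inr r)) = 1 := by
      simp only [hm, Sum.elim_inr]
      rw [e1, hLcube (1, r.1) _ hdeg1, hLcube (2, r.2) 1 (by rw [totalDegree_one]; norm_num), hL1]
    calc ∑ t, (v r t)^2 = ∑ t, Bm t (Sum.inr r) * Bm t (Sum.inr r) := by
          refine Finset.sum_congr rfl fun t _ => ?_
          rw [hv, pow_two]
      _ = L (m (Sum.inr r) * m (Sum.inr r)) := (hent _ _).symm
      _ ≤ 1 := le_of_eq h1
  -- expansion of the objective
  have hLf : L (∑ i, ∑ j, ∑ k, MvPolynomial.C (T i j k) * X (0, i) * X (1, j) * X (2, k))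
      = ∑ i, ∑ r : Fin n × Fin n, T i r.1 r.2 * ∑ t, u i t * v r t := by
    rw [map_sum]
    refine Finset.sum_congr rfl fun i _ => ?_
    have inner : ∀ j k, L (MvPolynomial.C (T i j k) * X (0, i) * X (1, j) * X (2, k))
        = T i j k * ∑ t, u i t * v (j,k) t := by
      intro j k
      have e1 : MvPolynomial.C (T i j k) * (X ((0:Fin 3), i) : MvPolynomial (Fin 3 × Fin n) ℝ) * X ((1:Fin 3), j) * X ((2:Fin 3), k)
          = MvPolynomial.C (T i j k) * (X ((0:Fin 3), i) * (X ((1:Fin 3), j) * X ((2:Fin 3), k))) := by ring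
      rw [e1, C_mul', _root_.map_smul, smul_eq_mul]
      congr 1
      have := hent (Sum.inl i) (Sum.inr (j,k))
      simp only [hm, Sum.elim_inl, Sum.elim_inr] at this
      rw [this]
    rw [map_sum]
    rw [Finset.sum_congr rfl fun j (_ : j ∈ Finset.univ) => map_sum L _ Finset.univ]
    rw [Finset.sum_congr rfl fun j (_ : j ∈ Finset.univ) =>
      Finset.sum_congr rfl fun k (_ : k ∈ Finset.univ) => inner j k]
    exact (Fintype.sum_prod_type
      (fun r : Fin n × Fin n => T i r.1 r.2 * ∑ t, u i t * v r t)).symm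
  have hsupeq : (⨆ x : Fin n → Bool, ⨆ y : Fin n → Bool, ⨆ z : Fin n → Bool,
      ∑ i, ∑ j, ∑ k, T i j k * (if x i then (1:ℝ) else -1) * (if y j then (1:ℝ) else -1) *
        (if z k then (1:ℝ) else -1)) = OPT := by
    rw [hOPTdef]
    apply congrArg
    funext x
    apply congrArg
    funext y
    apply congrArg
    funext z
    exact (hFeq x y z).symm
  rw [hLf, hsupeq]
  -- apply Grothendieck + combinatorial bound
  have happ := groth (fun i (r : Fin n × Fin n) => T i r.1 r.2) (Real.sqrt 3 * Real.sqrt n * OPT)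
    (fun ε δ hε hδ => combinatorial n T OPT hOPT ε δ hε hδ) u v hun hvn
  have hfinal : 100 * (Real.sqrt 3 * Real.sqrt n * OPT) ≤ 200 * Real.sqrt n * OPT := by
    have h1 : 0 ≤ Real.sqrt n * OPT := mul_nonneg (Real.sqrt_nonneg _) hOPT0
    nlinarith [sqrt_three_le, h1]
  calc ∑ i, ∑ r : Fin n × Fin n, T i r.1 r.2 * ∑ t, u i t * v r t
      ≤ 100 * (Real.sqrt 3 * Real.sqrt n * OPT) := happ
    _ ≤ 200 * Real.sqrt n * OPT := hfinal
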